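/- Let A be an n×n real symmetric positive semi-definite matrix of rank r such that every diagonal entry of A is nonzero. Then there exists a vector x = (x_1, …, x_n) ∈ ℝ^n with x_i ≠ 0 for all i = 1, …, n, and a positive semi-definite real symmetric matrix B of rank r − 1, such that A = x xᵗ + B. -/

import Mathlib

open Matrix

/-- Let `A` be an `n × n` real symmetric positive semi-definite matrix of
rank `r` such that every diagonal entry of `A` is nonzero.  Then there is a vector
`x ∈ ℝⁿ` with all entries nonzero and a positive semi-definite real symmetric matrix `B`
of rank `r - 1` such that `A = x xᵗ + B`. -/
theorem stmt0 (n r : ℕ) (A : Matrix (Fin n) (Fin n) ℝ)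
    (hA : A.PosSemidef) (hrank : A.rank = r) (hdiag : ∀ i, A i i ≠ 0) :
    ∃ (x : Fin n → ℝ) (B : Matrix (Fin n) (Fin n) ℝ),
      (∀ i, x i ≠ 0) ∧ B.PosSemidef ∧ B.rank = r - 1 ∧
      A = vecMulVec x x + B := by
  rcases Nat.eq_zero_or_pos n with hn | hn
  · subst hn
    have h1 := A.rank_le_card_width
    simp only [Fintype.card_fin] at h1
    have hr0 : r = 0 := by omega
    refine ⟨fun i => 1, A, fun i => i.elim0, hA, ?_, Subsingleton.elim _ _⟩
    rw [hrank, hr0]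
  -- nonneg of dot products with self
  have hdpnn : ∀ w : Fin n → ℝ, 0 ≤ w ⬝ᵥ w := fun w => by
    simp only [dotProduct]
    exact Finset.sum_nonneg fun i _ => mul_self_nonneg _
  obtain ⟨S, hS, hSA⟩ : ∃ S : Matrix (Fin n) (Fin n) ℝ, S.PosSemidef ∧ S * S = A := by
    open scoped MatrixOrder in
    exact ⟨CFC.sqrt A, (CFC.sqrt_nonneg A).posSemidef, CFC.sqrt_mul_sqrt_self A hA.nonneg⟩
  have hsym : ∀ i j, S i j = S j i := by
    intro i j
    conv_lhs => rw [← hS.1]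
    simp [Matrix.conjTranspose_apply]
  have hST : Sᵀ = S := by
    ext i j
    simp [Matrix.transpose_apply, hsym i j]
  have hdotS : ∀ v w : Fin n → ℝ, S *ᵥ v ⬝ᵥ w = v ⬝ᵥ S *ᵥ w := by
    intro v w
    rw [Matrix.dotProduct_mulVec, ← Matrix.vecMul_transpose, hST]
  have hrow_mem : ∀ i, S i ∈ LinearMap.range S.mulVecLin := by
    intro i
    refine ⟨Pi.single i 1, ?_⟩
    ext j
    simp [Matrix.mulVecLin_apply, Matrix.mulVec_single, hsym i j]
  have hAdiag : ∀ i, S i ⬝ᵥ S i = A i i := by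
    intro i
    rw [← hSA, Matrix.mul_apply]
    simp only [dotProduct]
    exact Finset.sum_congr rfl fun k _ => by rw [hsym i k]
  -- find a generic vector u in the range of S
  have hex : ∃ u : Fin n → ℝ, u ∈ LinearMap.range S.mulVecLin ∧ ∀ i, S i ⬝ᵥ u ≠ 0 := by
    by_contra hcon
    push_neg at hcon
    set V := LinearMap.range S.mulVecLin with hV
    let ℓ : Fin n → (V →ₗ[ℝ] ℝ) := fun i =>
      (LinearMap.proj i).comp ((S.mulVecLin).comp V.subtype)
    have hℓ : ∀ i (u : V), ℓ i u = S i ⬝ᵥ (u : Fin n → ℝ) := fun i u => rfl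
    have hcov : ⋃ i, ((LinearMap.ker (ℓ i) : Submodule ℝ V) : Set V) = Set.univ := by
      rw [Set.eq_univ_iff_forall]
      intro u
      obtain ⟨i, hi⟩ := hcon u u.2
      exact Set.mem_iUnion.mpr ⟨i, by simp only [SetLike.mem_coe, LinearMap.mem_ker, hℓ, hi]⟩
    obtain ⟨i, hi⟩ := Subspace.exists_eq_top_of_iUnion_eq_univ hcov
    have h0 : ℓ i ⟨S i, hrow_mem i⟩ = 0 := by
      have : (⟨S i, hrow_mem i⟩ : V) ∈ LinearMap.ker (ℓ i) := by rw [hi]; trivial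
      exact this
    rw [hℓ] at h0
    exact hdiag i (by rw [← hAdiag i]; exact h0)
  obtain ⟨u, huV, hu⟩ := hex
  have hune : u ≠ 0 := fun h => hu ⟨0, hn⟩ (by simp [h])
  have hc : 0 < u ⬝ᵥ u :=
    lt_of_le_of_ne (hdpnn u) fun h => hune (dotProduct_self_eq_zero.mp h.symm)
  set c := Real.sqrt (u ⬝ᵥ u) with hcdef
  have hcpos : 0 < c := Real.sqrt_pos.mpr hc
  set u' : Fin n → ℝ := c⁻¹ • u with hu'def
  have hu'1 : u' ⬝ᵥ u' = 1 := by
    rw [hu'def, smul_dotProduct, dotProduct_smul]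
    simp only [smul_eq_mul]
    rw [← mul_assoc, ← mul_inv, hcdef, Real.mul_self_sqrt hc.le]
    exact inv_mul_cancel₀ hc.ne'
  have hu'ne : u' ≠ 0 := fun h => by simp [h] at hu'1
  have hu'V : u' ∈ LinearMap.range S.mulVecLin := Submodule.smul_mem _ _ huV
  obtain ⟨v₀, hv₀⟩ := hu'V
  rw [Matrix.mulVecLin_apply] at hv₀
  set x : Fin n → ℝ := S *ᵥ u' with hxdef
  have hx : ∀ i, x i ≠ 0 := by
    intro i
    have : x i = S i ⬝ᵥ u' := rfl
    rw [this, hu'def, dotProduct_smul, smul_eq_mul]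
    exact mul_ne_zero (inv_ne_zero hcpos.ne') (hu i)
  set B : Matrix (Fin n) (Fin n) ℝ := A - vecMulVec x x with hBdef
  have hvmv : ∀ v : Fin n → ℝ, vecMulVec x x *ᵥ v = (x ⬝ᵥ v) • x := by
    intro v
    ext i
    simp only [Matrix.mulVec, dotProduct, Matrix.vecMulVec_apply, Pi.smul_apply,
      smul_eq_mul, Finset.sum_mul]
    exact Finset.sum_congr rfl fun j _ => by ring
  have hBv : ∀ v, B *ᵥ v = S *ᵥ ((S *ᵥ v) - (u' ⬝ᵥ (S *ᵥ v)) • u') := by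
    intro v
    rw [hBdef, Matrix.sub_mulVec, hvmv, Matrix.mulVec_sub, Matrix.mulVec_smul,
      Matrix.mulVec_mulVec, hSA]
    congr 2
    rw [hxdef, hdotS]
  have hBherm : B.IsHermitian := by
    refine hA.1.sub ?_
    ext i j
    simp [Matrix.conjTranspose_apply, Matrix.vecMulVec_apply, mul_comm]
  have hquad : ∀ v, v ⬝ᵥ (B *ᵥ v) =
      ((S *ᵥ v) - (u' ⬝ᵥ (S *ᵥ v)) • u') ⬝ᵥ ((S *ᵥ v) - (u' ⬝ᵥ (S *ᵥ v)) • u') := by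
    intro v
    rw [hBv, ← hdotS]
    simp only [dotProduct_sub, sub_dotProduct, dotProduct_smul,
      smul_dotProduct, smul_eq_mul, hu'1]
    rw [dotProduct_comm u' (S *ᵥ v)]
    ring
  have hBpsd : B.PosSemidef := by
    refine PosSemidef.of_dotProduct_mulVec_nonneg hBherm fun v => ?_
    rw [star_trivial, hquad]
    exact hdpnn _
  -- kernel of B
  have hker : LinearMap.ker B.mulVecLin =
      LinearMap.ker S.mulVecLin ⊔ Submodule.span ℝ {v₀} := by
    apply le_antisymm
    · intro v hv
      rw [LinearMap.mem_ker, Matrix.mulVecLin_apply] at hv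
      have hq0 : S *ᵥ ((S *ᵥ v) - (u' ⬝ᵥ (S *ᵥ v)) • u') = 0 := by rw [← hBv]; exact hv
      have hqV : (S *ᵥ v) - (u' ⬝ᵥ (S *ᵥ v)) • u' ∈ LinearMap.range S.mulVecLin :=
        Submodule.sub_mem _ ⟨v, rfl⟩ (Submodule.smul_mem _ _ ⟨v₀, by
          rw [Matrix.mulVecLin_apply, hv₀]⟩)
      obtain ⟨z, hz⟩ := hqV
      rw [Matrix.mulVecLin_apply] at hz
      have hq : (S *ᵥ v) - (u' ⬝ᵥ (S *ᵥ v)) • u' = 0 := by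
        refine dotProduct_self_eq_zero.mp ?_
        calc ((S *ᵥ v) - (u' ⬝ᵥ (S *ᵥ v)) • u') ⬝ᵥ ((S *ᵥ v) - (u' ⬝ᵥ (S *ᵥ v)) • u')
            = (S *ᵥ z) ⬝ᵥ ((S *ᵥ v) - (u' ⬝ᵥ (S *ᵥ v)) • u') := by rw [hz]
          _ = z ⬝ᵥ (S *ᵥ ((S *ᵥ v) - (u' ⬝ᵥ (S *ᵥ v)) • u')) := hdotS z _
          _ = 0 := by rw [hq0, dotProduct_zero]
      have hmem1 : v - (u' ⬝ᵥ (S *ᵥ v)) • v₀ ∈ LinearMap.ker S.mulVecLin := by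
        rw [LinearMap.mem_ker, Matrix.mulVecLin_apply, Matrix.mulVec_sub, Matrix.mulVec_smul,
          hv₀]
        exact hq
      have hmem2 : (u' ⬝ᵥ (S *ᵥ v)) • v₀ ∈ Submodule.span ℝ {v₀} :=
        Submodule.smul_mem _ _ (Submodule.mem_span_singleton_self v₀)
      have := Submodule.add_mem_sup hmem1 hmem2
      simpa using this
    · rw [sup_le_iff]
      constructor
      · intro v hv
        rw [LinearMap.mem_ker, Matrix.mulVecLin_apply] at hv ⊢
        rw [hBv, hv]
        simp
      · rw [Submodule.span_singleton_le_iff_mem, LinearMap.mem_ker, Matrix.mulVecLin_apply,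
          hBv, hv₀, hu'1, one_smul, sub_self, Matrix.mulVec_zero]
  have hv₀ne : v₀ ≠ 0 := by
    intro h
    rw [h, Matrix.mulVec_zero] at hv₀
    exact hu'ne hv₀.symm
  have hdisj : LinearMap.ker S.mulVecLin ⊓ Submodule.span ℝ {v₀} = ⊥ := by
    rw [Submodule.eq_bot_iff]
    intro y hy
    rw [Submodule.mem_inf] at hy
    obtain ⟨hy1, hy2⟩ := hy
    obtain ⟨a, rfl⟩ := Submodule.mem_span_singleton.mp hy2
    rw [LinearMap.mem_ker, Matrix.mulVecLin_apply, Matrix.mulVec_smul, hv₀] at hy1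
    rcases smul_eq_zero.mp hy1 with h | h
    · rw [h, zero_smul]
    · exact absurd h hu'ne
  -- rank computations
  have e1 : S.rank + Module.finrank ℝ (LinearMap.ker S.mulVecLin) = n := by
    have := LinearMap.finrank_range_add_finrank_ker S.mulVecLin
    rwa [Module.finrank_fin_fun] at this
  have e2 : B.rank + Module.finrank ℝ (LinearMap.ker B.mulVecLin) = n := by
    have := LinearMap.finrank_range_add_finrank_ker B.mulVecLin
    rwa [Module.finrank_fin_fun] at this
  have e3 : Module.finrank ℝ (LinearMap.ker B.mulVecLin) =
      Module.finrank ℝ (LinearMap.ker S.mulVecLin) + 1 := by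
    rw [hker]
    have h4 := Submodule.finrank_sup_add_finrank_inf_eq (LinearMap.ker S.mulVecLin)
      (Submodule.span ℝ {v₀})
    rw [hdisj, finrank_bot, finrank_span_singleton hv₀ne] at h4
    omega
  have hrS : S.rank = r := by
    have h := Matrix.rank_conjTranspose_mul_self S
    rw [hS.1, hSA, hrank] at h
    exact h.symm
  exact ⟨x, B, hx, hBpsd, by omega, by rw [hBdef]; abel⟩
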